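/- arXiv:1911.11252 — 9 statements merged into one kernel-verified Lean document; each statement's English description precedes it below -/
import Mathlib

section
/- Let G be a finite group acting faithfully and transitively on a finite set X with |X| = n, and suppose G contains a regular subgroup N (N acts transitively on X and only the identity of N fixes a point). Then every intersecting set S ⊆ G satisfies |S| ≤ |G|/n, and a point stabilizer G_x attains this bound; hence the maximum size of an intersecting set in G is exactly |G|/n. -/
open scoped Classical

/-- If a transitive group `G` contains a regular subgroup, then every
intersecting set has size at most `|G|/n`, and a point stabilizer attains this
bound. -/
theorem stmt3 {G X : Type*} [Group G] [Fintype G] [Fintype X]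
    [MulAction G X] [FaithfulSMul G X] [MulAction.IsPretransitive G X]
    (N : Subgroup G)
    (htrans : ∀ a b : X, ∃ g ∈ N, g • a = b)
    (hfree : ∀ g ∈ N, ∀ a : X, g • a = a → g = 1) :
    (∀ S : Finset G, (∀ g ∈ S, ∀ h ∈ S, ∃ i : X, g • i = h • i) →
        S.card * Fintype.card X ≤ Fintype.card G) ∧
      ∀ x : X,
        (∀ g ∈ Finset.univ.filter fun g : G => g • x = x,
          ∀ h ∈ Finset.univ.filter fun g : G => g • x = x,
            ∃ i : X, g • i = h • i) ∧
        (Finset.univ.filter fun g : G => g • x = x).card * Fintype.card X =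
          Fintype.card G := by
  constructor
  · intro S hS
    have hXN : Fintype.card X ≤ Fintype.card N := by
      rcases isEmpty_or_nonempty X with hX | ⟨⟨x₀⟩⟩
      · simp [Fintype.card_eq_zero]
      · choose f hf hf2 using fun b => htrans x₀ b
        have hinj : Function.Injective fun b : X => (⟨f b, hf b⟩ : N) := by
          intro a b hab
          have h : f a = f b := congrArg Subtype.val hab
          rw [← hf2 a, ← hf2 b, h]
        exact Fintype.card_le_of_injective _ hinj
    have hSQ : S.card ≤ Fintype.card (G ⧸ N) := by
      have hinj : Set.InjOn (QuotientGroup.mk : G → G ⧸ N) S := by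
        intro g hg h hh hgh
        have hmem : g⁻¹ * h ∈ N := QuotientGroup.eq.mp hgh
        obtain ⟨i, hi⟩ := hS g hg h hh
        have hfix : (g⁻¹ * h) • i = i := by rw [mul_smul, ← hi, inv_smul_smul]
        exact inv_mul_eq_one.mp (hfree _ hmem i hfix)
      calc S.card ≤ (Finset.univ : Finset (G ⧸ N)).card :=
            Finset.card_le_card_of_injOn _ (fun _ _ => Finset.mem_univ _) hinj
        _ = Fintype.card (G ⧸ N) := Finset.card_univ
    calc S.card * Fintype.card X ≤ Fintype.card (G ⧸ N) * Fintype.card N :=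
          Nat.mul_le_mul hSQ hXN
      _ = Fintype.card G := by
          have := Subgroup.card_eq_card_quotient_mul_card_subgroup N
          simpa [Nat.card_eq_fintype_card] using this.symm
  · intro x
    constructor
    · intro g hg h hh
      simp only [Finset.mem_filter] at hg hh
      exact ⟨x, by rw [hg.2, hh.2]⟩
    · have h1 : (Finset.univ.filter fun g : G => g • x = x).card
          = Fintype.card (MulAction.stabilizer G x) := by
        rw [Fintype.card_subtype]
        rfl
      have h2 : Fintype.card (MulAction.orbit G x) = Fintype.card X := by
        rw [Fintype.card_congr (Equiv.setCongr (MulAction.orbit_eq_univ G x)),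
          Fintype.card_congr (Equiv.Set.univ X)]
      rw [h1, ← h2, mul_comm]
      exact MulAction.card_orbit_mul_card_stabilizer_eq_card_group G x
end

section
/- Let G be a finite group acting faithfully and transitively on a finite set X with |X| = n, let N be a regular subgroup of G, and let S ⊆ G be an intersecting set with |S| = |G|/n. Then S is a transversal of N in G: every left coset gN of N satisfies |S ∩ gN| = 1. -/
open scoped Classical

/-- A maximum intersecting set in a transitive group with a regular subgroup
`N` is a transversal of `N`: it meets every left coset of `N` in exactly one
element. -/
theorem stmt4 {G X : Type*} [Group G] [Fintype G] [Fintype X]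
    [MulAction G X] [FaithfulSMul G X] [MulAction.IsPretransitive G X]
    (N : Subgroup G)
    (htrans : ∀ a b : X, ∃ g ∈ N, g • a = b)
    (hfree : ∀ g ∈ N, ∀ a : X, g • a = a → g = 1)
    (S : Finset G)
    (hS : ∀ g ∈ S, ∀ h ∈ S, ∃ i : X, g • i = h • i)
    (hcard : S.card * Fintype.card X = Fintype.card G) :
    ∀ g : G, (S.filter fun s => g⁻¹ * s ∈ N).card = 1 := by
  -- X is nonempty
  have hGpos : 0 < Fintype.card G := Fintype.card_pos
  have hXpos : 0 < Fintype.card X := by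
    by_contra h
    push_neg at h
    interval_cases h' : Fintype.card X
    · omega
  have hXne : Nonempty X := Fintype.card_pos_iff.mp hXpos
  obtain ⟨x₀⟩ := hXne
  -- |N| = |X|
  have hNX : Fintype.card N = Fintype.card X := by
    have hbij : Function.Bijective (fun n : N => (n : G) • x₀) := by
      constructor
      · rintro ⟨a, ha⟩ ⟨b, hb⟩ hab
        simp only at hab
        have : (b⁻¹ * a) • x₀ = x₀ := by
          rw [mul_smul, hab, ← mul_smul, inv_mul_cancel, one_smul]
        have := hfree _ (N.mul_mem (N.inv_mem hb) ha) x₀ this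
        ext
        exact (inv_mul_eq_one.mp this).symm
      · intro x
        obtain ⟨g, hg, hgx⟩ := htrans x₀ x
        exact ⟨⟨g, hg⟩, hgx⟩
    exact Fintype.card_of_bijective hbij
  -- injective on S into the quotient
  have hinj : Set.InjOn (fun s : G => (s : G ⧸ N)) ↑S := by
    intro a ha b hb hab
    simp only [QuotientGroup.eq] at hab
    obtain ⟨i, hi⟩ := hS a ha b hb
    have : (a⁻¹ * b) • i = i := by
      rw [mul_smul, ← hi, ← mul_smul, inv_mul_cancel, one_smul]
    exact inv_mul_eq_one.mp (hfree _ hab i this)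
  have hquot : Fintype.card (G ⧸ N) * Fintype.card N = Fintype.card G := by
    have := (Subgroup.card_eq_card_quotient_mul_card_subgroup N).symm
    simpa [Nat.card_eq_fintype_card] using this
  have hScard : S.card = Fintype.card (G ⧸ N) := by
    rw [hNX] at hquot
    have := hcard.trans hquot.symm
    exact Nat.eq_of_mul_eq_mul_right hXpos this
  have himg : S.image (fun s : G => (s : G ⧸ N)) = Finset.univ := by
    apply Finset.eq_univ_of_card
    rw [Finset.card_image_of_injOn hinj, hScard]
  intro g
  have hmem : (g : G ⧸ N) ∈ S.image (fun s : G => (s : G ⧸ N)) := by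
    rw [himg]; exact Finset.mem_univ _
  obtain ⟨s, hsS, hs⟩ := Finset.mem_image.mp hmem
  rw [Finset.card_eq_one]
  refine ⟨s, ?_⟩
  ext t
  simp only [Finset.mem_filter, Finset.mem_singleton]
  constructor
  · rintro ⟨htS, htN⟩
    refine hinj htS hsS ?_
    simp only
    rw [hs, eq_comm, QuotientGroup.eq]
    exact htN
  · rintro rfl
    refine ⟨hsS, ?_⟩
    rw [← QuotientGroup.eq]
    exact hs.symm
end

section
/- Let G be a finite group acting faithfully and 2-transitively on a finite set X, let N be a regular normal subgroup of G, fix x ∈ X, and let G_x be the stabilizer of x. Let g = uh with u ∈ N and h ∈ G_x. If g is G-conjugate to an element of G_x, then: (a) there exists m ∈ N with m⁻¹ g m = h; and (b) h is the unique element of G_x that is an N-conjugate of g (i.e., if m' ∈ N and m'⁻¹ g m' ∈ G_x, then m'⁻¹ g m' = h). -/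
open scoped Classical

/-- Let `G` be 2-transitive with regular normal subgroup `N`, and `g = u h`
with `u ∈ N`, `h ∈ G_x`. If `g` is `G`-conjugate to an element of `G_x`, then
`g` can be conjugated to `h` by an element of `N`, and `h` is the unique
`N`-conjugate of `g` lying in `G_x`. -/
theorem stmt5 {G X : Type*} [Group G] [Fintype G] [Fintype X]
    [MulAction G X] [FaithfulSMul G X]
    (h2t : ∀ a b c d : X, a ≠ b → c ≠ d → ∃ g : G, g • a = c ∧ g • b = d)
    (N : Subgroup G) [N.Normal]
    (htrans : ∀ a b : X, ∃ g ∈ N, g • a = b)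
    (hfree : ∀ g ∈ N, ∀ a : X, g • a = a → g = 1)
    (x : X) (u h : G) (hu : u ∈ N) (hh : h • x = x)
    (g : G) (hg : g = u * h)
    (hconj : ∃ a : G, (a⁻¹ * g * a) • x = x) :
    (∃ m ∈ N, m⁻¹ * g * m = h) ∧
      ∀ m' ∈ N, (m'⁻¹ * g * m') • x = x → m'⁻¹ * g * m' = h := by
  have hhx : h⁻¹ • x = x := by
    conv_lhs => rw [← hh]
    simp
  -- key: any N-conjugate of g fixing x equals h
  have key : ∀ m' ∈ N, (m'⁻¹ * g * m') • x = x → m'⁻¹ * g * m' = h := by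
    intro m' hm' hfix
    set v : G := m'⁻¹ * u * (h * m' * h⁻¹) with hv
    have hvN : v ∈ N := by
      exact N.mul_mem (N.mul_mem (N.inv_mem hm') hu)
        (Subgroup.Normal.conj_mem ‹N.Normal› m' hm' h)
    have hdecomp : m'⁻¹ * g * m' = v * h := by
      rw [hg, hv]; group
    have hvx : v • x = x := by
      have h1 : (v * h) • x = x := by rw [← hdecomp]; exact hfix
      calc v • x = v • (h • x) := by rw [hh]
        _ = (v * h) • x := (mul_smul v h x).symm
        _ = x := h1
    have : v = 1 := hfree v hvN x hvx
    rw [hdecomp, this, one_mul]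
  refine ⟨?_, key⟩
  obtain ⟨a, ha⟩ := hconj
  obtain ⟨n, hn, hnx⟩ := htrans x (a • x)
  set k : G := n⁻¹ * a with hk
  have hkx : k • x = x := by
    rw [hk, mul_smul, ← hnx, inv_smul_smul]
  have hfix : (n⁻¹ * g * n) • x = x := by
    have hrw : n⁻¹ * g * n = k * (a⁻¹ * g * a) * k⁻¹ := by
      rw [hk]; group
    have hkinv : k⁻¹ • x = x := by
      conv_lhs => rw [← hkx]
      simp
    rw [hrw, mul_smul, mul_smul, hkinv, ha, hkx]
  exact ⟨n, hn, key n hn hfix⟩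
end

section
/- Let H and G be finite groups acting faithfully on the same finite set X, with H a proper subgroup of G, and suppose both H and G act 2-transitively on X. Then there exists a derangement in G that does not lie in H (an element of G \ H with no fixed points on X). -/
open scoped Classical
open MulAction Finset

section Aux

variable {K : Type*} [Group K] [Fintype K] {Y : Type*} [Fintype Y] [MulAction K Y]

/-- Burnside for a transitive action: total fixed points equals group order. -/
lemma aux_sum_fix [Nonempty Y] (h : IsPretransitive K Y) :
    ∑ k : K, Fintype.card (fixedBy Y k) = Fintype.card K := by
  have : Nonempty (Unique (Quotient (orbitRel K Y))) :=
    (pretransitive_iff_unique_quotient_of_nonempty K Y).mp h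
  obtain ⟨u⟩ := this
  have := MulAction.sum_card_fixedBy_eq_card_orbits_mul_card_group K Y
  rw [this, Fintype.card_unique, one_mul]

lemma aux_card_fix_prod (k : K) :
    Fintype.card (fixedBy (Y × Y) k) = Fintype.card (fixedBy Y k) ^ 2 := by
  rw [sq, ← Fintype.card_prod]
  apply Fintype.card_congr
  refine ⟨fun p => (⟨p.1.1, ?_⟩, ⟨p.1.2, ?_⟩), fun q => ⟨(q.1.1, q.2.1), ?_⟩, ?_, ?_⟩
  · have := p.2
    simp only [mem_fixedBy, Prod.smul_def, Prod.ext_iff] at this ⊢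
    exact this.1
  · have := p.2
    simp only [mem_fixedBy, Prod.smul_def, Prod.ext_iff] at this ⊢
    exact this.2
  · simp only [mem_fixedBy, Prod.smul_def, Prod.ext_iff]
    exact ⟨q.1.2, q.2.2⟩
  · intro p; rfl
  · intro q; rfl

/-- If a group acts so that the diagonal action on pairs has exactly two orbits
(which follows from 2-transitivity with at least two points), Burnside gives 2|K|. -/
lemma aux_sum_fix_sq {a b : Y} (hab : a ≠ b)
    (h2t : ∀ a b c d : Y, a ≠ b → c ≠ d → ∃ g : K, g • a = c ∧ g • b = d) :
    ∑ k : K, Fintype.card (fixedBy Y k) ^ 2 = 2 * Fintype.card K := by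
  have htrans : ∀ c d : Y, ∃ g : K, g • c = d := by
    intro c d
    by_cases hcd : c = d
    · exact ⟨1, by simp [hcd]⟩
    · obtain ⟨g, hg, _⟩ := h2t c d d c hcd (Ne.symm hcd)
      exact ⟨g, hg⟩
  have key : Fintype.card (Quotient (orbitRel K (Y × Y))) = 2 := by
    rw [← Nat.card_eq_fintype_card, Nat.card_eq_two_iff]
    refine ⟨⟦(a, a)⟧, ⟦(a, b)⟧, ?_, ?_⟩
    · intro h
      obtain ⟨g, hg⟩ := Quotient.eq''.mp h
      have hg' : g • (a, b) = (a, a) := hg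
      have hg1 : g • a = a := congrArg Prod.fst hg'
      have hg2 : g • b = a := congrArg Prod.snd hg'
      exact hab (smul_left_cancel g (hg1.trans hg2.symm))
    · ext q
      simp only [Set.mem_insert_iff, Set.mem_singleton_iff, Set.mem_univ, iff_true]
      induction q using Quotient.inductionOn' with
      | h p =>
        obtain ⟨x, y⟩ := p
        by_cases hxy : x = y
        · subst hxy
          left
          refine Quotient.sound' ?_
          obtain ⟨g, hg⟩ := htrans a x
          exact ⟨g, show g • (a, a) = (x, x) from Prod.ext hg hg⟩
        · right
          refine Quotient.sound' ?_
          obtain ⟨g, hg1, hg2⟩ := h2t a b x y hab hxy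
          exact ⟨g, show g • (a, b) = (x, y) from Prod.ext hg1 hg2⟩
  calc ∑ k : K, Fintype.card (fixedBy Y k) ^ 2
      = ∑ k : K, Fintype.card (fixedBy (Y × Y) k) := by
        simp_rw [aux_card_fix_prod]
    _ = Fintype.card (Quotient (orbitRel K (Y × Y))) * Fintype.card K :=
        MulAction.sum_card_fixedBy_eq_card_orbits_mul_card_group K (Y × Y)
    _ = 2 * Fintype.card K := by rw [key]

end Aux

/-- If `H` is a proper subgroup of `G` and both act 2-transitively on `X`,
then `G` has a derangement not lying in `H`. -/
theorem stmt8 {G X : Type*} [Group G] [Fintype G] [Fintype X]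
    [MulAction G X] [FaithfulSMul G X]
    (H : Subgroup G) (hH : H ≠ ⊤)
    (h2tG : ∀ a b c d : X, a ≠ b → c ≠ d → ∃ g : G, g • a = c ∧ g • b = d)
    (h2tH : ∀ a b c d : X, a ≠ b → c ≠ d → ∃ h ∈ H, h • a = c ∧ h • b = d) :
    ∃ g : G, g ∉ H ∧ ∀ i : X, g • i ≠ i := by
  classical
  -- an element outside H
  obtain ⟨g₀, hg₀⟩ : ∃ g : G, g ∉ H := by
    by_contra h
    push_neg at h
    exact hH (Subgroup.eq_top_iff' H |>.mpr h)
  -- two distinct points of X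
  have hg₀1 : g₀ ≠ 1 := fun h => hg₀ (h ▸ H.one_mem)
  obtain ⟨x₀, hx₀⟩ : ∃ x : X, g₀ • x ≠ x := by
    by_contra h
    push_neg at h
    exact hg₀1 (eq_of_smul_eq_smul (fun x => by rw [h x, one_smul]))
  have hab : (g₀ • x₀ : X) ≠ x₀ := hx₀
  haveI : Nonempty X := ⟨x₀⟩
  set fix : G → ℕ := fun g => Fintype.card (fixedBy X g) with hfix
  -- transitivity of G
  have htransG : IsPretransitive G X := by
    constructor
    intro c d
    by_cases hcd : c = d
    · exact ⟨1, by simp [hcd]⟩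
    · obtain ⟨g, hg, _⟩ := h2tG c d d c hcd (Ne.symm hcd)
      exact ⟨g, hg⟩
  have htransH : IsPretransitive H X := by
    constructor
    intro c d
    by_cases hcd : c = d
    · exact ⟨1, by simp [hcd]⟩
    · obtain ⟨g, hgH, hg, _⟩ := h2tH c d d c hcd (Ne.symm hcd)
      exact ⟨⟨g, hgH⟩, hg⟩
  have h2tH' : ∀ a b c d : X, a ≠ b → c ≠ d → ∃ h : H, h • a = c ∧ h • b = d := by
    intro a b c d h1 h2
    obtain ⟨g, hgH, hg1, hg2⟩ := h2tH a b c d h1 h2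
    exact ⟨⟨g, hgH⟩, hg1, hg2⟩
  -- fixedBy for H elements equals fixedBy for their images in G
  have hfixH : ∀ h : H, Fintype.card (fixedBy X h) = fix (h : G) := by
    intro h
    apply Fintype.card_congr
    apply Equiv.setCongr
    ext x
    simp [mem_fixedBy, Subgroup.smul_def]
  -- Burnside sums
  have sumG : ∑ g : G, fix g = Fintype.card G := aux_sum_fix htransG
  have sumG2 : ∑ g : G, fix g ^ 2 = 2 * Fintype.card G := aux_sum_fix_sq hab h2tG
  have sumH : ∑ h : H, fix (h : G) = Fintype.card H := by
    rw [← aux_sum_fix htransH]; exact Finset.sum_congr rfl fun h _ => (hfixH h).symm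
  have sumH2 : ∑ h : H, fix (h : G) ^ 2 = 2 * Fintype.card H := by
    have := aux_sum_fix_sq (K := H) hab h2tH'
    rw [← this]; exact Finset.sum_congr rfl fun h _ => by rw [hfixH h]
  -- split sums over G into H-part and complement
  set s : Finset G := Finset.univ.filter (· ∉ H) with hs
  set t : Finset G := Finset.univ.filter (· ∈ H) with ht
  have hsplit : ∀ f : G → ℕ, ∑ g : G, f g = ∑ g ∈ t, f g + ∑ g ∈ s, f g := by
    intro f
    rw [hs, ht, Finset.sum_filter_add_sum_filter_not Finset.univ (· ∈ H) f]
  have htsum : ∀ f : G → ℕ, ∑ g ∈ t, f g = ∑ h : H, f (h : G) := by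
    intro f
    exact Finset.sum_subtype t (p := (· ∈ H)) (fun x => by simp [ht]) f
  have hcardt : t.card = Fintype.card H := by
    rw [← Fintype.card_coe]
    apply Fintype.card_congr
    exact (Equiv.subtypeEquivRight (fun g => by simp [ht])).symm
  have hcards : s.card + Fintype.card H = Fintype.card G := by
    have h1 := hsplit (fun _ => 1)
    simp only [Finset.sum_const, smul_eq_mul, mul_one, Finset.card_univ] at h1
    omega
  have hssum : ∑ g ∈ s, fix g = s.card := by
    have h1 := hsplit fix
    rw [htsum, sumH, sumG] at h1
    omega
  have hssum2 : ∑ g ∈ s, fix g ^ 2 = 2 * s.card := by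
    have h1 := hsplit (fun g => fix g ^ 2)
    rw [htsum, sumH2, sumG2] at h1
    have : Fintype.card H ≤ Fintype.card G := by omega
    omega
  have hscard_pos : 0 < s.card := by
    apply Finset.card_pos.mpr
    exact ⟨g₀, by simp [hs, hg₀]⟩
  -- now the counting argument
  by_contra hcon
  push_neg at hcon
  have hge : ∀ g ∈ s, 1 ≤ fix g := by
    intro g hg
    simp only [hs, Finset.mem_filter, Finset.mem_univ, true_and] at hg
    obtain ⟨i, hi⟩ := hcon g hg
    rw [hfix]
    exact Fintype.card_pos_iff.mpr ⟨⟨i, hi⟩⟩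
  have hall1 : ∀ g ∈ s, fix g = 1 := by
    have heq : ∑ g ∈ s, (1 : ℕ) = ∑ g ∈ s, fix g := by
      rw [hssum]; simp
    intro g hg
    exact ((Finset.sum_eq_sum_iff_of_le hge).mp heq g hg).symm
  have : ∑ g ∈ s, fix g ^ 2 = s.card := by
    rw [Finset.sum_congr rfl (fun g hg => by rw [hall1 g hg, one_pow])]
    simp
  omega
end

section
/- Let G be a finite group acting faithfully on a finite set X, and suppose G contains a proper subgroup H that acts 2-transitively on X. Then G is generated by H ∪ Der_G, where Der_G is the set of derangements of G. In particular, if H is generated by its derangements Der_H, then G is generated by Der_G. -/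
open scoped Classical
open Finset

section Aux

variable {G X : Type*} [Group G] [Fintype G] [Fintype X] [MulAction G X]

/-- translation: the number of `h ∈ H` with `h • x = y` equals the number with `h • x = x`,
given transitivity. -/
private lemma auxA (H : Subgroup G)
    (htr : ∀ x y : X, ∃ h ∈ H, h • x = y) (x y : X) :
    (univ.filter fun h : ↥H => (h : G) • x = y).card
      = (univ.filter fun h : ↥H => (h : G) • x = x).card := by
  obtain ⟨h0, h0H, hh0⟩ := htr x y
  refine (Finset.card_equiv (Equiv.mulLeft (⟨h0, h0H⟩ : H)) ?_).symm
  intro h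
  simp only [mem_filter, mem_univ, true_and, Equiv.coe_mulLeft]
  have hc : ((⟨h0, h0H⟩ * h : H) : G) • x = h0 • ((h : G) • x) := by
    rw [Subgroup.coe_mul, mul_smul]
  constructor
  · intro hx
    rw [hc, hx, hh0]
  · intro hx
    rw [hc, ← hh0] at hx
    exact smul_left_cancel h0 hx

/-- 2-transitive translation for pairs. -/
private lemma auxB (H : Subgroup G)
    (h2t : ∀ a b c d : X, a ≠ b → c ≠ d → ∃ h ∈ H, h • a = c ∧ h • b = d)
    {x y u v : X} (hxy : x ≠ y) (huv : u ≠ v) :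
    (univ.filter fun h : ↥H => (h : G) • x = u ∧ (h : G) • y = v).card
      = (univ.filter fun h : ↥H => (h : G) • x = x ∧ (h : G) • y = y).card := by
  obtain ⟨h0, h0H, hh0x, hh0y⟩ := h2t x y u v hxy huv
  refine (Finset.card_equiv (Equiv.mulLeft (⟨h0, h0H⟩ : H)) ?_).symm
  intro h
  simp only [mem_filter, mem_univ, true_and, Equiv.coe_mulLeft]
  have hc : ∀ z : X, ((⟨h0, h0H⟩ * h : H) : G) • z = h0 • ((h : G) • z) := by
    intro z; rw [Subgroup.coe_mul, mul_smul]
  constructor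
  · rintro ⟨hx, hy⟩
    rw [hc x, hc y, hx, hy, hh0x, hh0y]
    exact ⟨rfl, rfl⟩
  · rintro ⟨hx, hy⟩
    rw [hc x, ← hh0x] at hx
    rw [hc y, ← hh0y] at hy
    exact ⟨smul_left_cancel h0 hx, smul_left_cancel h0 hy⟩

end Aux

/-- If `G` contains a proper 2-transitive subgroup `H`, then `G` is generated
by `H ∪ Der_G`; in particular if `H` is generated by its derangements then `G`
is generated by `Der_G`. -/
theorem stmt12 {G X : Type*} [Group G] [Fintype G] [Fintype X]
    [MulAction G X] [FaithfulSMul G X]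
    (H : Subgroup G) (hH : H ≠ ⊤)
    (h2tH : ∀ a b c d : X, a ≠ b → c ≠ d → ∃ h ∈ H, h • a = c ∧ h • b = d) :
    Subgroup.closure ((H : Set G) ∪ {g : G | ∀ i : X, g • i ≠ i}) = ⊤ ∧
      (Subgroup.closure ((H : Set G) ∩ {g : G | ∀ i : X, g • i ≠ i}) = H →
        Subgroup.closure {g : G | ∀ i : X, g • i ≠ i} = ⊤) := by
  -- X is nontrivial, since otherwise G is trivial by faithfulness and H = ⊤
  have hnt : Nontrivial X := by
    by_contra hX
    rw [not_nontrivial_iff_subsingleton] at hX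
    have hg1 : ∀ g : G, g = 1 := fun g =>
      eq_of_smul_eq_smul (fun x : X => Subsingleton.elim _ _)
    apply hH
    ext g
    simp [hg1 g, one_mem]
  -- transitivity from 2-transitivity
  have htr : ∀ x y : X, ∃ h ∈ H, h • x = y := by
    intro x y
    obtain ⟨x', hx'⟩ := exists_ne x
    obtain ⟨y', hy'⟩ := exists_ne y
    obtain ⟨h, hh, h1, _⟩ := h2tH x x' y y' (Ne.symm hx') (Ne.symm hy')
    exact ⟨h, hh, h1⟩
  set n := Fintype.card X with hn
  have hn2 : 2 ≤ n := Fintype.one_lt_card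
  have hnpos : 0 < n := by omega
  have hHpos : 0 < Fintype.card ↥H := Fintype.card_pos
  -- stabilizer counts
  have hAsum : ∀ x : X,
      n * (univ.filter fun h : ↥H => (h : G) • x = x).card = Fintype.card ↥H := by
    intro x
    have hf : Fintype.card ↥H
        = ∑ y : X, (univ.filter fun h : ↥H => (h : G) • x = y).card := by
      rw [← Finset.card_univ]
      exact Finset.card_eq_sum_card_fiberwise (fun h _ => Finset.mem_univ _)
    rw [hf]
    rw [Finset.sum_congr rfl (fun y _ => auxA H htr x y)]
    simp [Finset.sum_const, Finset.card_univ, mul_comm, hn]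
  -- the diagonal of X × X as a filter
  have hdiag : (univ.filter fun p : X × X => p.1 = p.2)
      = univ.image (fun x : X => (x, x)) := by
    ext p
    simp only [mem_filter, mem_univ, true_and, mem_image]
    constructor
    · intro hp
      exact ⟨p.1, by obtain ⟨a, b⟩ := p; cases hp; rfl⟩
    · rintro ⟨x, rfl⟩
      rfl
  have hinj : Function.Injective (fun x : X => (x, x)) := by
    intro a b hab
    exact (Prod.mk.injEq _ _ _ _ ▸ hab).1
  have hdiagcard : (univ.filter fun p : X × X => p.1 = p.2).card = n := by
    rw [hdiag, Finset.card_image_of_injective _ hinj, Finset.card_univ]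
  have hoffcard : (univ.filter fun p : X × X => ¬ p.1 = p.2).card = n * n - n := by
    have h1 := Finset.card_filter_add_card_filter_not
      (s := (univ : Finset (X × X))) (p := fun p : X × X => p.1 = p.2)
    rw [hdiagcard, Finset.card_univ, Fintype.card_prod, ← hn] at h1
    omega
  have hnn : 0 < n * n - n := by
    have : 2 * n ≤ n * n := Nat.mul_le_mul_right n hn2
    omega
  -- pair counts
  have hBsum : ∀ x y : X, x ≠ y →
      (n * n - n) * (univ.filter fun h : ↥H =>
        (h : G) • x = x ∧ (h : G) • y = y).card = Fintype.card ↥H := by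
    intro x y hxy
    have hf : Fintype.card ↥H = ∑ p : X × X,
        (univ.filter fun h : ↥H => (h : G) • x = p.1 ∧ (h : G) • y = p.2).card := by
      rw [← Finset.card_univ]
      have := Finset.card_eq_sum_card_fiberwise
        (f := fun h : ↥H => (((h : G) • x, (h : G) • y) : X × X))
        (s := (univ : Finset ↥H)) (t := univ) (fun h _ => Finset.mem_univ _)
      rw [this]
      apply Finset.sum_congr rfl
      intro p _
      congr 1
      apply Finset.filter_congr
      intro h _
      rw [Prod.ext_iff]
    rw [hf, ← Finset.sum_filter_add_sum_filter_not univ (fun p : X × X => p.1 = p.2)]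
    have hzero : ∑ p ∈ univ.filter (fun p : X × X => p.1 = p.2),
        (univ.filter fun h : ↥H => (h : G) • x = p.1 ∧ (h : G) • y = p.2).card = 0 := by
      apply Finset.sum_eq_zero
      intro p hp
      rw [mem_filter] at hp
      rw [Finset.card_eq_zero]
      apply Finset.filter_eq_empty_iff.mpr
      rintro h - ⟨h1, h2⟩
      apply hxy
      apply smul_left_cancel (h : G)
      rw [h1, h2, hp.2]
    rw [hzero, zero_add]
    have hcongr : ∀ p ∈ univ.filter (fun p : X × X => ¬ p.1 = p.2),
        (univ.filter fun h : ↥H => (h : G) • x = p.1 ∧ (h : G) • y = p.2).card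
          = (univ.filter fun h : ↥H =>
              (h : G) • x = x ∧ (h : G) • y = y).card := by
      intro p hp
      rw [mem_filter] at hp
      exact auxB H h2tH hxy hp.2
    rw [Finset.sum_congr rfl hcongr, Finset.sum_const, hoffcard, smul_eq_mul]
  -- number of fixed points
  set fix : G → ℕ := fun k => (univ.filter fun x : X => k • x = x).card with hfix
  have hterm : ∀ (g : G) (h : ↥H),
      fix (g * h) = ∑ x : X, (if (h : G) • x = g⁻¹ • x then 1 else 0) := by
    intro g h
    rw [hfix]
    simp only
    rw [Finset.card_filter]
    apply Finset.sum_congr rfl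
    intro x _
    congr 1
    rw [eq_iff_iff, mul_smul, smul_eq_iff_eq_inv_smul]
  have hT : ∑ x : X, (univ.filter fun h : ↥H => (h : G) • x = x).card
      = Fintype.card ↥H := by
    apply Nat.eq_of_mul_eq_mul_left hnpos
    rw [Finset.mul_sum, Finset.sum_congr rfl (fun x _ => hAsum x)]
    simp [Finset.sum_const, Finset.card_univ, mul_comm, hn]
  have S1 : ∀ g : G, ∑ h : ↥H, fix (g * h) = Fintype.card ↥H := by
    intro g
    rw [Finset.sum_congr rfl (fun h _ => hterm g h), Finset.sum_comm]
    have h1 : ∀ x : X, ∑ h : ↥H, (if (h : G) • x = g⁻¹ • x then 1 else 0)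
        = (univ.filter fun h : ↥H => (h : G) • x = x).card := by
      intro x
      rw [← Finset.card_filter]
      exact auxA H htr x (g⁻¹ • x)
    rw [Finset.sum_congr rfl (fun x _ => h1 x), hT]
  -- second moment
  have S2 : ∀ g : G, ∑ h : ↥H, fix (g * h) * fix (g * h)
      = 2 * Fintype.card ↥H := by
    intro g
    have hterm2 : ∀ h : ↥H, fix (g * h) * fix (g * h)
        = ∑ p : X × X, (if (h : G) • p.1 = g⁻¹ • p.1 ∧ (h : G) • p.2 = g⁻¹ • p.2
            then 1 else 0) := by
      intro h
      rw [hterm g h, Finset.sum_mul_sum, Fintype.sum_prod_type]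
      apply Finset.sum_congr rfl
      intro x _
      apply Finset.sum_congr rfl
      intro y _
      by_cases h1 : (h : G) • x = g⁻¹ • x <;> by_cases h2 : (h : G) • y = g⁻¹ • y <;>
        simp [h1, h2]
    rw [Finset.sum_congr rfl (fun h _ => hterm2 h), Finset.sum_comm]
    have hcardform : ∀ p : X × X,
        ∑ h : ↥H, (if (h : G) • p.1 = g⁻¹ • p.1 ∧ (h : G) • p.2 = g⁻¹ • p.2
            then 1 else 0)
          = (univ.filter fun h : ↥H =>
              (h : G) • p.1 = g⁻¹ • p.1 ∧ (h : G) • p.2 = g⁻¹ • p.2).card := by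
      intro p
      rw [← Finset.card_filter]
    rw [Finset.sum_congr rfl (fun p _ => hcardform p)]
    rw [← Finset.sum_filter_add_sum_filter_not univ (fun p : X × X => p.1 = p.2)]
    have hd : ∑ p ∈ univ.filter (fun p : X × X => p.1 = p.2),
        (univ.filter fun h : ↥H =>
          (h : G) • p.1 = g⁻¹ • p.1 ∧ (h : G) • p.2 = g⁻¹ • p.2).card
        = Fintype.card ↥H := by
      rw [hdiag, Finset.sum_image (fun a _ b _ hab => hinj hab)]
      have : ∀ x : X, (univ.filter fun h : ↥H =>
          (h : G) • x = g⁻¹ • x ∧ (h : G) • x = g⁻¹ • x).card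
          = (univ.filter fun h : ↥H => (h : G) • x = x).card := by
        intro x
        have e1 : (univ.filter fun h : ↥H =>
            (h : G) • x = g⁻¹ • x ∧ (h : G) • x = g⁻¹ • x)
            = univ.filter fun h : ↥H => (h : G) • x = g⁻¹ • x := by
          apply Finset.filter_congr
          intro h _
          simp
        rw [e1]
        exact auxA H htr x (g⁻¹ • x)
      rw [Finset.sum_congr rfl (fun x _ => this x), hT]
    have ho : ∑ p ∈ univ.filter (fun p : X × X => ¬ p.1 = p.2),
        (univ.filter fun h : ↥H =>
          (h : G) • p.1 = g⁻¹ • p.1 ∧ (h : G) • p.2 = g⁻¹ • p.2).card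
        = Fintype.card ↥H := by
      have heach : ∀ p ∈ univ.filter (fun p : X × X => ¬ p.1 = p.2),
          (univ.filter fun h : ↥H =>
            (h : G) • p.1 = g⁻¹ • p.1 ∧ (h : G) • p.2 = g⁻¹ • p.2).card
          = (univ.filter fun h : ↥H =>
              (h : G) • p.1 = p.1 ∧ (h : G) • p.2 = p.2).card := by
        intro p hp
        rw [mem_filter] at hp
        have hne : p.1 ≠ p.2 := hp.2
        have hne' : g⁻¹ • p.1 ≠ g⁻¹ • p.2 := fun e => hne (smul_left_cancel g⁻¹ e)
        exact auxB H h2tH hne hne'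
      rw [Finset.sum_congr rfl heach]
      apply Nat.eq_of_mul_eq_mul_left hnn
      rw [Finset.mul_sum]
      have hcongr2 : ∀ p ∈ univ.filter (fun p : X × X => ¬ p.1 = p.2),
          (n * n - n) * (univ.filter fun h : ↥H =>
            (h : G) • p.1 = p.1 ∧ (h : G) • p.2 = p.2).card = Fintype.card ↥H := by
        intro p hp
        rw [mem_filter] at hp
        exact hBsum p.1 p.2 hp.2
      rw [Finset.sum_congr rfl hcongr2, Finset.sum_const, hoffcard, smul_eq_mul]
    rw [hd, ho]
    ring
  -- key step: every coset gH contains a derangement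
  have key : ∀ g : G, ∃ h : ↥H, ∀ i : X, (g * (h : G)) • i ≠ i := by
    intro g
    by_contra hcon
    push_neg at hcon
    have hge : ∀ h : ↥H, 1 ≤ fix (g * h) := by
      intro h
      obtain ⟨i, hi⟩ := hcon h
      refine Nat.one_le_iff_ne_zero.mpr ?_
      rw [hfix]
      simp only
      rw [← Nat.pos_iff_ne_zero]
      exact Finset.card_pos.mpr ⟨i, by simp [hi]⟩
    have hall1 : ∀ h : ↥H, fix (g * h) = 1 := by
      intro h0
      by_contra hne
      have h2 : 2 ≤ fix (g * h0) := by
        have := hge h0; omega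
      have hlt : ∑ _h : ↥H, (1 : ℕ) < ∑ h : ↥H, fix (g * h) :=
        Finset.sum_lt_sum (fun i _ => hge i) ⟨h0, Finset.mem_univ _, by omega⟩
      rw [S1 g] at hlt
      simp [Finset.card_univ] at hlt
    have hsum : ∑ h : ↥H, fix (g * h) * fix (g * h) = Fintype.card ↥H := by
      simp only [hall1]
      simp [Finset.card_univ]
    rw [S2 g] at hsum
    omega
  -- first conclusion
  have hclos : Subgroup.closure ((H : Set G) ∪ {g : G | ∀ i : X, g • i ≠ i}) = ⊤ := by
    rw [eq_top_iff]
    intro g _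
    obtain ⟨h, hder⟩ := key g
    have h1 : g * (h : G) ∈
        Subgroup.closure ((H : Set G) ∪ {g : G | ∀ i : X, g • i ≠ i}) :=
      Subgroup.subset_closure (Or.inr hder)
    have h2 : (h : G) ∈
        Subgroup.closure ((H : Set G) ∪ {g : G | ∀ i : X, g • i ≠ i}) :=
      Subgroup.subset_closure (Or.inl h.2)
    have h3 := mul_mem h1 (inv_mem h2)
    simpa using h3
  refine ⟨hclos, ?_⟩
  intro hHgen
  have hle : H ≤ Subgroup.closure {g : G | ∀ i : X, g • i ≠ i} := by
    rw [← hHgen]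
    exact Subgroup.closure_mono Set.inter_subset_right
  rw [eq_top_iff, ← hclos]
  apply (Subgroup.closure_le _).mpr
  exact Set.union_subset hle Subgroup.subset_closure
end

section
/- Let G be a finite group acting faithfully and 2-transitively on a finite set X, with a regular normal subgroup N, and let G_x be the stabilizer of a point x ∈ X. If G_x (equivalently G/N) is a simple group and there exists a derangement of G not lying in N, then the derangements of G generate G (equivalently, the derangement graph Γ_G is connected). -/
open scoped Classical


private lemma simple_of_mulEquiv {A B : Type*} [Group A] [Group B] (e : A ≃* B)
    (hA : IsSimpleGroup A) : IsSimpleGroup B := by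
  haveI : Nontrivial B := e.symm.toEquiv.nontrivial
  constructor
  intro K hK
  have hcomap : (K.comap e.toMonoidHom).Normal := Subgroup.Normal.comap hK e.toMonoidHom
  have hKeq : Subgroup.map e.toMonoidHom (K.comap e.toMonoidHom) = K :=
    Subgroup.map_comap_eq_self_of_surjective e.surjective K
  rcases hA.eq_bot_or_eq_top_of_normal _ hcomap with h | h
  · left; rw [← hKeq, h, Subgroup.map_bot]
  · right; rw [← hKeq, h, Subgroup.map_top_of_surjective _ e.surjective]

/-- Let `G` be 2-transitive with a regular normal subgroup `N`. If a point
stabilizer is a simple group and there is a derangement outside `N`, then the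
derangements generate `G`. -/
theorem stmt13 {G X : Type*} [Group G] [Fintype G] [Fintype X]
    [MulAction G X] [FaithfulSMul G X]
    (h2t : ∀ a b c d : X, a ≠ b → c ≠ d → ∃ g : G, g • a = c ∧ g • b = d)
    (N : Subgroup G) [N.Normal]
    (htrans : ∀ a b : X, ∃ g ∈ N, g • a = b)
    (hfree : ∀ g ∈ N, ∀ a : X, g • a = a → g = 1)
    (x : X)
    (hsimple : IsSimpleGroup (MulAction.stabilizer G x))
    (hder : ∃ g : G, g ∉ N ∧ ∀ i : X, g • i ≠ i) :
    Subgroup.closure {g : G | ∀ i : X, g • i ≠ i} = ⊤ := by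
  set D : Set G := {g : G | ∀ i : X, g • i ≠ i} with hD
  set H := Subgroup.closure D with hH
  -- N ≤ H
  have hNH : N ≤ H := by
    intro n hn
    by_cases h1 : n = 1
    · rw [h1]; exact H.one_mem
    · exact Subgroup.subset_closure (fun i hi => h1 (hfree n hn i hi))
  -- D is conjugation invariant
  have hconj : ∀ g : G, (MulAut.conj g).toMonoidHom '' D = D := by
    intro g
    ext d
    constructor
    · rintro ⟨d', hd', rfl⟩ i hi
      apply hd' (g⁻¹ • i)
      have : (g * d' * g⁻¹) • i = i := hi
      have := congrArg (fun z => g⁻¹ • z) this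
      simpa [mul_smul] using this
    · intro hd
      refine ⟨g⁻¹ * d * g, ?_, by simp [MulAut.conj]; group⟩
      intro i hi
      apply hd (g • i)
      have := congrArg (fun z => g • z) hi
      simpa [mul_smul] using this
  have hHnormal : H.Normal := by
    constructor
    intro n hn g
    have : (MulAut.conj g).toMonoidHom n ∈ H.map (MulAut.conj g).toMonoidHom :=
      Subgroup.mem_map_of_mem _ hn
    rw [hH, MonoidHom.map_closure, hconj] at this
    simpa [MulAut.conj] using this
  -- the quotient
  let φ := QuotientGroup.mk' N
  let ψ := φ.comp (MulAction.stabilizer G x).subtype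
  have hinj : Function.Injective ψ := by
    rw [← MonoidHom.ker_eq_bot_iff]
    ext ⟨s, hs⟩
    simp only [MonoidHom.mem_ker, Subgroup.mem_bot]
    constructor
    · intro h
      have hsN : s ∈ N := by
        have : φ s = 1 := h
        rwa [QuotientGroup.mk'_apply, QuotientGroup.eq_one_iff] at this
      have : s = 1 := hfree s hsN x hs
      exact Subtype.ext this
    · intro h; rw [h]; exact map_one ψ
  have hsurj : Function.Surjective ψ := by
    intro q
    obtain ⟨g, rfl⟩ := QuotientGroup.mk'_surjective N q
    obtain ⟨n, hnN, hnx⟩ := htrans x (g • x)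
    have hst : n⁻¹ * g ∈ MulAction.stabilizer G x := by
      have : (n⁻¹ * g) • x = x := by
        rw [mul_smul, ← hnx, inv_smul_smul]
      exact this
    refine ⟨⟨n⁻¹ * g, hst⟩, ?_⟩
    show φ (n⁻¹ * g) = φ g
    rw [QuotientGroup.mk'_apply, QuotientGroup.mk'_apply, QuotientGroup.eq]
    have hc := (‹N.Normal›).conj_mem n hnN g⁻¹
    have heq : (n⁻¹ * g)⁻¹ * g = g⁻¹ * n * g⁻¹⁻¹ := by group
    rw [heq]; exact hc
  let e : MulAction.stabilizer G x ≃* G ⧸ N := MulEquiv.ofBijective ψ ⟨hinj, hsurj⟩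
  have hQsimple : IsSimpleGroup (G ⧸ N) := simple_of_mulEquiv e hsimple
  -- image of H in quotient
  have hKnormal : (H.map φ).Normal :=
    Subgroup.Normal.map hHnormal φ (QuotientGroup.mk'_surjective N)
  obtain ⟨g, hgN, hgder⟩ := hder
  have hgH : g ∈ H := Subgroup.subset_closure hgder
  have hKne : H.map φ ≠ ⊥ := by
    intro hbot
    have : φ g ∈ H.map φ := Subgroup.mem_map_of_mem _ hgH
    rw [hbot, Subgroup.mem_bot, QuotientGroup.mk'_apply, QuotientGroup.eq_one_iff] at this
    exact hgN this
  have hKtop : H.map φ = ⊤ := (hKnormal.eq_bot_or_eq_top.resolve_left hKne)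
  have hker : φ.ker = N := QuotientGroup.ker_mk' N
  have : Subgroup.comap φ (H.map φ) = H := by
    rw [Subgroup.comap_map_eq, hker, sup_eq_left.mpr hNH]
  rw [hKtop, Subgroup.comap_top] at this
  exact this.symm
end

section
/- Let G be a finite group acting faithfully and 2-transitively on a finite set X, with a regular normal subgroup N, and let H = G_x be the stabilizer of a point x ∈ X. For h ∈ H, the coset Nh contains a derangement if and only if h centralizes some nonidentity element of N (i.e., there exists u ∈ N, u ≠ 1, with hu = uh). -/
open scoped Classical

/-- Let `G` be 2-transitive with a regular normal subgroup `N` and let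
`h ∈ G_x`. The coset `Nh` contains a derangement iff `h` centralizes a
nonidentity element of `N`. -/
theorem stmt14 {G X : Type*} [Group G] [Fintype G] [Fintype X]
    [MulAction G X] [FaithfulSMul G X]
    (h2t : ∀ a b c d : X, a ≠ b → c ≠ d → ∃ g : G, g • a = c ∧ g • b = d)
    (N : Subgroup G) [N.Normal]
    (htrans : ∀ a b : X, ∃ g ∈ N, g • a = b)
    (hfree : ∀ g ∈ N, ∀ a : X, g • a = a → g = 1)
    (x : X) (h : G) (hh : h • x = x) :
    (∃ u ∈ N, ∀ i : X, (u * h) • i ≠ i) ↔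
      ∃ u ∈ N, u ≠ 1 ∧ h * u = u * h := by
  have hN : N.Normal := inferInstance
  set f : N → N := fun n => ⟨(n : G) * h * (n : G)⁻¹ * h⁻¹, by
    have h1 : h * (n : G)⁻¹ * h⁻¹ ∈ N := hN.conj_mem _ (inv_mem n.2) h
    have he : (n : G) * h * (n : G)⁻¹ * h⁻¹ = (n : G) * (h * (n : G)⁻¹ * h⁻¹) := by
      group
    rw [he]; exact mul_mem n.2 h1⟩ with hf
  -- key: for u ∈ N, u*h has a fixed point iff u is in the range of f
  have key : ∀ u : G, u ∈ N → ((∃ i : X, (u * h) • i = i) ↔ ∃ n : N, u = (f n : G)) := by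
    intro u hu
    constructor
    · rintro ⟨i, hi⟩
      obtain ⟨n, hn, hnx⟩ := htrans x i
      have hg : (n⁻¹ * u * (h * n * h⁻¹)) ∈ N :=
        mul_mem (mul_mem (inv_mem hn) hu) (hN.conj_mem _ hn h)
      have hgx : (n⁻¹ * u * (h * n * h⁻¹)) • x = x := by
        have h0 : (u * h) • (n • x) = n • x := by rw [hnx]; exact hi
        have h2 : (n⁻¹ * (u * h) * n) • x = x := by
          rw [mul_smul, mul_smul, h0, inv_smul_eq_iff]
        calc (n⁻¹ * u * (h * n * h⁻¹)) • x
            = (n⁻¹ * u * (h * n * h⁻¹)) • (h • x) := by rw [hh]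
          _ = ((n⁻¹ * u * (h * n * h⁻¹)) * h) • x := (mul_smul _ h x).symm
          _ = (n⁻¹ * (u * h) * n) • x := by
              have hq : (n⁻¹ * u * (h * n * h⁻¹)) * h = n⁻¹ * (u * h) * n := by group
              rw [hq]
          _ = x := h2
      have e := hfree _ hg x hgx
      refine ⟨⟨n, hn⟩, ?_⟩
      show u = n * h * n⁻¹ * h⁻¹
      have e2 : u = n * (n⁻¹ * u * (h * n * h⁻¹)) * (h * n⁻¹ * h⁻¹) := by group
      rw [e] at e2
      rw [e2]; group
    · rintro ⟨n, hue⟩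
      refine ⟨(n : G) • x, ?_⟩
      rw [hue]
      show ((n : G) * h * (n : G)⁻¹ * h⁻¹ * h) • ((n : G) • x) = (n : G) • x
      rw [← mul_smul]
      have he : ((n : G) * h * (n : G)⁻¹ * h⁻¹ * h) * (n : G) = (n : G) * h := by group
      rw [he, mul_smul, hh]
  constructor
  · rintro ⟨u, hu, hder⟩
    have hns : ¬ Function.Surjective f := by
      intro hs
      obtain ⟨n, hn⟩ := hs ⟨u, hu⟩
      obtain ⟨i, hi⟩ := (key u hu).2 ⟨n, by rw [hn]⟩
      exact hder i hi
    have hni : ¬ Function.Injective f := fun hi => hns (Finite.injective_iff_surjective.1 hi)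
    rw [Function.not_injective_iff] at hni
    obtain ⟨n, m, hfe, hne⟩ := hni
    refine ⟨(m : G)⁻¹ * n, mul_mem (inv_mem m.2) n.2, ?_, ?_⟩
    · intro hcontra
      exact hne (Subtype.ext (inv_mul_eq_one.mp hcontra).symm)
    · have hfe' : (n : G) * h * (n : G)⁻¹ * h⁻¹ = (m : G) * h * (m : G)⁻¹ * h⁻¹ :=
        congrArg Subtype.val hfe
      have e' : (n : G) * h * (n : G)⁻¹ = (m : G) * h * (m : G)⁻¹ := by
        have := congrArg (· * h) hfe'
        simpa [mul_assoc] using this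
      calc h * ((m : G)⁻¹ * n) = (m : G)⁻¹ * ((m : G) * h * (m : G)⁻¹) * n := by group
        _ = (m : G)⁻¹ * ((n : G) * h * (n : G)⁻¹) * n := by rw [e']
        _ = (m : G)⁻¹ * n * h := by group
  · rintro ⟨w, hw, hw1, hcomm⟩
    have hfw : f ⟨w, hw⟩ = f 1 := by
      apply Subtype.ext
      show w * h * w⁻¹ * h⁻¹ = ((1 : G) * h * (1 : G)⁻¹ * h⁻¹)
      have : w * h * w⁻¹ = h := by
        rw [← hcomm]; group
      rw [this]; group
    have hni : ¬ Function.Injective f := by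
      intro hinj
      have := hinj hfw
      exact hw1 (congrArg Subtype.val this)
    have hns : ¬ Function.Surjective f := fun hs => hni (Finite.injective_iff_surjective.2 hs)
    rw [Function.Surjective] at hns
    push_neg at hns
    obtain ⟨u, hu⟩ := hns
    refine ⟨u, u.2, ?_⟩
    intro i hi
    obtain ⟨n, hn⟩ := (key u u.2).1 ⟨i, hi⟩
    exact hu n (Subtype.ext hn.symm)
end

section
/- Let G be a finite group acting faithfully and 2-transitively on a finite set X, with a regular normal subgroup N, and let H = G_x be the stabilizer of a point x ∈ X. Then the subgroup of G generated by the set Der_G of derangements equals the subgroup generated by N together with the two-point stabilizers G_x ∩ G_y for all y ∈ X with y ≠ x. -/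
open scoped Classical

/-- Let `G` be 2-transitive with a regular normal subgroup `N` and point
stabilizer `G_x`. The subgroup generated by the derangements of `G` equals the
subgroup generated by `N` together with the two-point stabilizers
`G_x ∩ G_y`, `y ≠ x`. -/
theorem stmt15 {G X : Type*} [Group G] [Fintype G] [Fintype X]
    [MulAction G X] [FaithfulSMul G X]
    (h2t : ∀ a b c d : X, a ≠ b → c ≠ d → ∃ g : G, g • a = c ∧ g • b = d)
    (N : Subgroup G) [N.Normal]
    (htrans : ∀ a b : X, ∃ g ∈ N, g • a = b)
    (hfree : ∀ g ∈ N, ∀ a : X, g • a = a → g = 1)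
    (x : X) :
    Subgroup.closure {g : G | ∀ i : X, g • i ≠ i} =
      Subgroup.closure
        ((N : Set G) ∪ {g : G | g • x = x ∧ ∃ y : X, y ≠ x ∧ g • y = y}) := by
  classical
  have hNnorm : N.Normal := inferInstance
  -- If h fixes x and fixes m • x for m ∈ N, then h commutes with m.
  have key : ∀ h : G, h • x = x → ∀ m ∈ N, h • (m • x) = m • x → h * m = m * h := by
    intro h hx m hm hfix
    have hxinv : h⁻¹ • x = x := by rw [inv_smul_eq_iff, hx]
    have hk : (m⁻¹ * (h * m * h⁻¹)) • x = x := by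
      have e : (m⁻¹ * (h * m * h⁻¹)) • x = m⁻¹ • (h • (m • (h⁻¹ • x))) := by
        simp [mul_smul]
      rw [e, hxinv, hfix, inv_smul_smul]
    have hmem : m⁻¹ * (h * m * h⁻¹) ∈ N :=
      N.mul_mem (N.inv_mem hm) (hNnorm.conj_mem m hm h)
    have h1 : m⁻¹ * (h * m * h⁻¹) = 1 := hfree _ hmem x hk
    have h2 : h * m * h⁻¹ = m := (inv_mul_eq_one.mp h1).symm
    calc h * m = (h * m * h⁻¹) * h := by group
    _ = m * h := by rw [h2]
  -- Conversely, commuting gives a fixed point.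
  have key' : ∀ h : G, h • x = x → ∀ m : G, h * m = m * h → h • (m • x) = m • x := by
    intro h hx m hcomm
    calc h • (m • x) = (h * m) • x := by rw [mul_smul]
    _ = (m * h) • x := by rw [hcomm]
    _ = m • x := by rw [mul_smul, hx]
  -- nontrivial elements of N are derangements
  have hNder : ∀ m ∈ N, m ≠ 1 → ∀ i : X, m • i ≠ i := by
    intro m hm hm1 i hfix
    exact hm1 (hfree m hm i hfix)
  -- Main equivalence: for h fixing x, "h commutes with a nontrivial element of N"
  -- iff "there is nontrivial n₀ ∈ N with n₀ * h a derangement".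
  have main : ∀ h : G, h • x = x →
      ((∃ m ∈ N, m ≠ (1:G) ∧ h * m = m * h) ↔
        ∃ n₀ ∈ N, n₀ ≠ (1:G) ∧ ∀ i : X, (n₀ * h) • i ≠ i) := by
    intro h hx
    have hxinv : h⁻¹ • x = x := by rw [inv_smul_eq_iff, hx]
    set φ : N → N := fun m =>
      ⟨(m : G) * (h * (m : G)⁻¹ * h⁻¹),
        N.mul_mem m.2 (hNnorm.conj_mem _ (N.inv_mem m.2) h)⟩ with hφ
    have hφ1 : φ 1 = 1 := by
      apply Subtype.ext
      simp [hφ]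
    have hfixchar : ∀ (n₀ : N) (m : N),
        ((n₀ : G) * h) • ((m : G) • x) = (m : G) • x ↔ φ m = n₀ := by
      intro n₀ m
      constructor
      · intro hfix
        have hk : ((m : G)⁻¹ * ((n₀ : G) * (h * (m : G) * h⁻¹))) • x = x := by
          have e : ((m : G)⁻¹ * ((n₀ : G) * (h * (m : G) * h⁻¹))) • x
              = (m : G)⁻¹ • (((n₀ : G) * h) • ((m : G) • (h⁻¹ • x))) := by
            simp [mul_smul]
          rw [e, hxinv, hfix, inv_smul_smul]
        have hmem : (m : G)⁻¹ * ((n₀ : G) * (h * (m : G) * h⁻¹)) ∈ N :=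
          N.mul_mem (N.inv_mem m.2) (N.mul_mem n₀.2 (hNnorm.conj_mem _ m.2 h))
        have h1 : (m : G)⁻¹ * ((n₀ : G) * (h * (m : G) * h⁻¹)) = 1 :=
          hfree _ hmem x hk
        apply Subtype.ext
        have h2 : (n₀ : G) * (h * (m : G) * h⁻¹) = m := (inv_mul_eq_one.mp h1).symm
        show (m : G) * (h * (m : G)⁻¹ * h⁻¹) = n₀
        have h4 : (n₀ : G) = (m : G) * (h * (m : G) * h⁻¹)⁻¹ :=
          eq_mul_inv_of_mul_eq h2
        rw [h4]; group
      · intro heq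
        have h3 : (n₀ : G) = (m : G) * (h * (m : G)⁻¹ * h⁻¹) := by rw [← heq]
        rw [h3]
        calc ((m : G) * (h * (m : G)⁻¹ * h⁻¹) * h) • ((m : G) • x)
            = (m : G) • (h • ((m : G)⁻¹ • ((h⁻¹ * h) • ((m : G) • x)))) := by
              simp [mul_smul]
        _ = (m : G) • x := by
              rw [inv_mul_cancel, one_smul, inv_smul_smul, hx]
    constructor
    · rintro ⟨m, hm, hm1, hcomm⟩
      have hφm : φ ⟨m, hm⟩ = φ 1 := by
        rw [hφ1]
        apply Subtype.ext
        show m * (h * m⁻¹ * h⁻¹) = 1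
        have hcomm' : h * m⁻¹ = m⁻¹ * h := Commute.inv_right hcomm
        rw [hcomm']; group
      have hninj : ¬ Function.Injective φ := by
        intro hinj
        exact hm1 (congrArg Subtype.val (hinj hφm))
      have hnsurj : ¬ Function.Surjective φ := fun hsurj =>
        hninj ((Finite.injective_iff_surjective).mpr hsurj)
      rw [Function.Surjective] at hnsurj
      push_neg at hnsurj
      obtain ⟨n₀, hn₀⟩ := hnsurj
      refine ⟨(n₀ : G), n₀.2, ?_, ?_⟩
      · intro h1
        exact hn₀ 1 (by rw [hφ1]; exact (Subtype.ext h1).symm)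
      · intro i hfix
        obtain ⟨m', hm', hmx⟩ := htrans x i
        have hfx : ((n₀ : G) * h) • (((⟨m', hm'⟩ : N) : G) • x)
            = ((⟨m', hm'⟩ : N) : G) • x := by
          show ((n₀ : G) * h) • (m' • x) = m' • x
          rw [hmx]; exact hfix
        exact hn₀ ⟨m', hm'⟩ ((hfixchar n₀ ⟨m', hm'⟩).mp hfx)
    · rintro ⟨n₀, hn₀, hn₀1, hder⟩
      by_contra hnc
      push_neg at hnc
      have hinj : Function.Injective φ := by
        intro a b hab
        have hval : (a : G) * (h * (a : G)⁻¹ * h⁻¹) = (b : G) * (h * (b : G)⁻¹ * h⁻¹) :=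
          congrArg Subtype.val hab
        have e1 : (a : G) * h * (a : G)⁻¹ = (b : G) * h * (b : G)⁻¹ := by
          have h' := congrArg (· * h) hval
          simpa [mul_assoc] using h'
        have hcomm : h * ((b : G)⁻¹ * (a : G)) = ((b : G)⁻¹ * (a : G)) * h := by
          have : (b : G)⁻¹ * (a : G) * h = h * ((b : G)⁻¹ * (a : G)) := by
            calc (b : G)⁻¹ * (a : G) * h
                = (b : G)⁻¹ * ((a : G) * h * (a : G)⁻¹) * (a : G) := by group
            _ = (b : G)⁻¹ * ((b : G) * h * (b : G)⁻¹) * (a : G) := by rw [e1]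
            _ = h * ((b : G)⁻¹ * (a : G)) := by group
          exact this.symm
        have hmem : (b : G)⁻¹ * (a : G) ∈ N := N.mul_mem (N.inv_mem b.2) a.2
        by_cases hba : (b : G)⁻¹ * (a : G) = 1
        · exact (Subtype.ext (inv_mul_eq_one.mp hba)).symm
        · exact absurd hcomm (hnc _ hmem hba)
      have hsurj := (Finite.injective_iff_surjective).mp hinj
      obtain ⟨m', hm'⟩ := hsurj ⟨n₀, hn₀⟩
      exact hder _ ((hfixchar ⟨n₀, hn₀⟩ m').mpr hm')
  -- Now the two inclusions.
  apply le_antisymm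
  · -- derangements ⊆ closure S
    rw [Subgroup.closure_le]
    intro g hg
    have hg' : ∀ i : X, g • i ≠ i := hg
    -- g • x ≠ x
    obtain ⟨n, hn, hnx⟩ := htrans x (g • x)
    set h : G := n⁻¹ * g with hh
    have hx : h • x = x := by
      rw [hh, mul_smul, ← hnx, inv_smul_smul]
    have hgnh : g = n * h := by rw [hh]; group
    -- h fixes a second point
    have hsec : ∃ y : X, y ≠ x ∧ h • y = y := by
      have hex : ∃ m ∈ N, m ≠ (1:G) ∧ h * m = m * h := by
        refine (main h hx).mpr ⟨n, hn, ?_, ?_⟩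
        · intro h1
          rw [h1, one_smul] at hnx
          exact hg' x hnx.symm
        · rw [← hgnh]; exact hg'
      obtain ⟨m, hm, hm1, hcomm⟩ := hex
      refine ⟨m • x, ?_, key' h hx m hcomm⟩
      intro heq
      exact hm1 (hfree m hm x heq)
    obtain ⟨y, hy, hfy⟩ := hsec
    rw [hgnh]
    exact Subgroup.mul_mem _
      (Subgroup.subset_closure (Set.mem_union_left _ hn))
      (Subgroup.subset_closure (Set.mem_union_right _ ⟨hx, y, hy, hfy⟩))
  · -- S ⊆ closure D
    rw [Subgroup.closure_le]
    rintro g (hgN | ⟨hgx, y, hy, hfy⟩)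
    · by_cases hg1 : g = 1
      · rw [hg1]; exact Subgroup.one_mem _
      · exact Subgroup.subset_closure (hNder g hgN hg1)
    · -- g fixes x and y ≠ x; find derangements whose product is g
      obtain ⟨m, hm, hmx⟩ := htrans x y
      have hm1 : m ≠ 1 := by
        intro h1; rw [h1, one_smul] at hmx; exact hy hmx.symm
      have hcomm : g * m = m * g := by
        apply key g hgx m hm
        rw [hmx]; exact hfy
      obtain ⟨n₀, hn₀, hn₀1, hder⟩ := (main g hgx).mp ⟨m, hm, hm1, hcomm⟩
      have : g = n₀⁻¹ * (n₀ * g) := by group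
      rw [this]
      exact Subgroup.mul_mem _
        (Subgroup.subset_closure (hNder n₀⁻¹ (N.inv_mem hn₀)
          (by simpa using hn₀1)))
        (Subgroup.subset_closure hder)
end

section
/- Let G be a finite group acting faithfully and 2-transitively on a finite set X, with a regular normal subgroup N. Then G is a Frobenius group (every nonidentity element fixes at most one point of X) if and only if the derangement graph Γ_G is a disjoint union of complete graphs, i.e., for all g, h, k ∈ G, if g is adjacent to h and h is adjacent to k and g ≠ k, then g is adjacent to k in Γ_G. -/
open scoped Classical

/-- A 2-transitive group with a regular normal subgroup `N` is a Frobenius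
group iff its derangement graph is a disjoint union of complete graphs. -/
theorem stmt17 {G X : Type*} [Group G] [Fintype G] [Fintype X]
    [MulAction G X] [FaithfulSMul G X]
    (h2t : ∀ a b c d : X, a ≠ b → c ≠ d → ∃ g : G, g • a = c ∧ g • b = d)
    (N : Subgroup G) [N.Normal]
    (htrans : ∀ a b : X, ∃ g ∈ N, g • a = b)
    (hfree : ∀ g ∈ N, ∀ a : X, g • a = a → g = 1) :
    (∀ g : G, g ≠ 1 → ∀ i j : X, g • i = i → g • j = j → i = j) ↔
      (∀ g h k : G,
        (g ≠ h ∧ ∀ i : X, g • i ≠ h • i) →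
        (h ≠ k ∧ ∀ i : X, h • i ≠ k • i) →
        g ≠ k → (g ≠ k ∧ ∀ i : X, g • i ≠ k • i)) := by
  constructor
  · intro F g h k hgh hhk hgk
    -- Key lemma: every derangement lies in N.
    have key : ∀ a : G, (∀ x : X, a • x ≠ x) → a ∈ N := by
      intro a ha
      by_cases hX : Nonempty X
      · obtain ⟨x⟩ := hX
        obtain ⟨n, hnN, hnx⟩ := htrans x (a • x)
        set s : G := n⁻¹ * a with hs
        have hsx : s • x = x := by
          rw [hs, mul_smul, ← hnx, inv_smul_smul]
        by_cases hs1 : s = 1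
        · have hna : n = a := inv_mul_eq_one.mp hs1
          rwa [← hna]
        · exfalso
          set φ : N → N := fun u => ⟨(u : G) * s * (u : G)⁻¹ * s⁻¹, by
            have h1 : s * (u : G)⁻¹ * s⁻¹ ∈ N :=
              Subgroup.Normal.conj_mem ‹N.Normal› _ (N.inv_mem u.2) s
            have h2 := N.mul_mem u.2 h1
            simpa [mul_assoc] using h2⟩ with hφ
          have hinj : Function.Injective φ := by
            intro u v huv
            have h1 : (u : G) * s * (u : G)⁻¹ * s⁻¹ = (v : G) * s * (v : G)⁻¹ * s⁻¹ :=
              congrArg Subtype.val huv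
            have h2 : (u : G) * s * (u : G)⁻¹ = (v : G) * s * (v : G)⁻¹ :=
              mul_right_cancel h1
            have hw : ((v : G)⁻¹ * u) * s = s * ((v : G)⁻¹ * u) := by
              have h3 := congrArg (fun z : G => (v : G)⁻¹ * z * (u : G)) h2
              simpa [mul_assoc] using h3
            have hwx : s • (((v : G)⁻¹ * u) • x) = ((v : G)⁻¹ * u) • x := by
              rw [← mul_smul, ← hw, mul_smul, hsx]
            have hxx : ((v : G)⁻¹ * u) • x = x := F s hs1 _ x hwx hsx
            have hwN : (v : G)⁻¹ * u ∈ N := N.mul_mem (N.inv_mem v.2) u.2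
            have hw1 : (v : G)⁻¹ * (u : G) = 1 := hfree _ hwN x hxx
            exact Subtype.ext (inv_mul_eq_one.mp hw1).symm ▸ rfl
          have hsurj : Function.Surjective φ := Finite.injective_iff_surjective.mp hinj
          obtain ⟨u, hu⟩ := hsurj ⟨n, hnN⟩
          have hu' : (u : G) * s * (u : G)⁻¹ * s⁻¹ = n := congrArg Subtype.val hu
          have hax : a • ((u : G) • x) = (u : G) • x := by
            have han : a = (u : G) * s * (u : G)⁻¹ := by
              have : a = n * s := by rw [hs]; group
              rw [this, ← hu']; group
            rw [han, ← mul_smul]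
            have h4 : (u : G) * s * (u : G)⁻¹ * (u : G) = (u : G) * s := by group
            rw [h4, mul_smul, hsx]
          exact ha _ hax
      · have h1 : a = 1 := eq_of_smul_eq_smul (fun x : X => (hX ⟨x⟩).elim)
        rw [h1]; exact N.one_mem
    have haN : h⁻¹ * g ∈ N := by
      apply key
      intro x hx
      rw [mul_smul] at hx
      exact hgh.2 x (inv_smul_eq_iff.mp hx)
    have hbN : k⁻¹ * h ∈ N := by
      apply key
      intro x hx
      rw [mul_smul] at hx
      exact hhk.2 x (inv_smul_eq_iff.mp hx)
    have hprod : k⁻¹ * g ∈ N := by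
      have := N.mul_mem hbN haN
      simpa [mul_assoc] using this
    refine ⟨hgk, fun x hx => ?_⟩
    have hfix : (k⁻¹ * g) • x = x := by
      rw [mul_smul, hx, inv_smul_smul]
    have := hfree _ hprod x hfix
    exact hgk (inv_mul_eq_one.mp this).symm
  · intro C g hg1 i j hgi hgj
    by_contra hij
    -- the map sending x to the unique n ∈ N with n • x = g • x
    set e : X → N := fun x => ⟨(htrans x (g • x)).choose,
      (htrans x (g • x)).choose_spec.1⟩ with he
    have hespec : ∀ x : X, (e x : G) • x = g • x := fun x =>
      (htrans x (g • x)).choose_spec.2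
    have heone : ∀ x : X, g • x = x → (e x : G) = 1 := by
      intro x hx
      apply hfree _ (e x).2
      rw [hespec x, hx]
    -- |N| = |X|
    have hbij : Function.Bijective (fun n : N => (n : G) • i) := by
      constructor
      · intro m n hmn
        simp only at hmn
        have : ((n : G)⁻¹ * m) • i = i := by
          rw [mul_smul, hmn, inv_smul_smul]
        have h1 := hfree _ (N.mul_mem (N.inv_mem n.2) m.2) i this
        exact Subtype.ext (inv_mul_eq_one.mp h1).symm ▸ rfl
      · intro y
        obtain ⟨m, hmN, hm⟩ := htrans i y
        exact ⟨⟨m, hmN⟩, hm⟩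
    have hcard : Fintype.card N = Fintype.card X := Fintype.card_of_bijective hbij
    have hnotsurj : ¬ Function.Surjective e := by
      intro hsurj
      have hbije : Function.Bijective e :=
        (Fintype.bijective_iff_surjective_and_card e).mpr ⟨hsurj, hcard.symm⟩
      have h1 : e i = e j := by
        apply Subtype.ext
        rw [heone i hgi, heone j hgj]
      exact hij (hbije.1 h1)
    rw [Function.Surjective] at hnotsurj
    push_neg at hnotsurj
    obtain ⟨n, hn⟩ := hnotsurj
    have hn1 : (n : G) ≠ 1 := by
      intro h1
      apply hn i
      apply Subtype.ext
      rw [heone i hgi, h1]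
    have hnd : ∀ x : X, (n : G) • x ≠ x := by
      intro x hx
      exact hn1 (hfree _ n.2 x hx)
    have hgn : ∀ x : X, g • x ≠ (n : G) • x := by
      intro x hx
      apply hn x
      apply Subtype.ext
      have h1 : ((n : G)⁻¹ * (e x : G)) • x = x := by
        rw [mul_smul, hespec x, hx, inv_smul_smul]
      have h2 := hfree _ (N.mul_mem (N.inv_mem n.2) (e x).2) x h1
      exact (inv_mul_eq_one.mp h2).symm
    have hC := C g (n : G) 1
      ⟨fun h1 => hgn i (by rw [h1]), hgn⟩
      ⟨hn1, fun x => by simpa using hnd x⟩ hg1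
    exact (hC.2 i) (by simpa using hgi)
end
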